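/- arXiv:1410.2194 — 7 statements merged into one kernel-verified Lean document; each statement's English description precedes it below -/
import Mathlib

section
/- A finite semigroup S is not Mal'cev nilpotent if and only if there exist a positive integer m, distinct elements x, y ∈ S, and elements w₁, w₂, …, w_m ∈ S¹ such that x = λ_m(x, y, w₁, …, w_m) and y = ρ_m(x, y, w₁, …, w_m). -/
/-! Common definitions: Mal'cev nilpotency, the relations η_n, η, the congruence η*,
Rees matrix semigroups (with and without zero), regularity, CS-diagonality,
the row relation ~, ideals, principal series and Rees factor isomorphisms. -/

/-- The pair `(λ_n, ρ_n)` of Mal'cev words in a monoid, with `λ₀ = x`, `ρ₀ = y`,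
`λ_{k+1} = λ_k * z (k+1) * ρ_k` and `ρ_{k+1} = ρ_k * z (k+1) * λ_k`. -/
def malcev {M : Type*} [Monoid M] (x y : M) (z : ℕ → M) : ℕ → M × M
  | 0 => (x, y)
  | k + 1 =>
      ((malcev x y z k).1 * z (k + 1) * (malcev x y z k).2,
       (malcev x y z k).2 * z (k + 1) * (malcev x y z k).1)

/-- A semigroup `S` is Mal'cev nilpotent if for some positive `n`,
`λ_n(a,b,c₁,…,c_n) = ρ_n(a,b,c₁,…,c_n)` for all `a b ∈ S` and all `cᵢ ∈ S¹`,
where `S¹ = WithOne S`. -/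
def MalcevNilpotent (S : Type*) [Semigroup S] : Prop :=
  ∃ n : ℕ, 0 < n ∧ ∀ (a b : S) (z : ℕ → WithOne S),
    (malcev (a : WithOne S) (b : WithOne S) z n).1 =
    (malcev (a : WithOne S) (b : WithOne S) z n).2

/-- The relation `η_n` on a semigroup `S`: `η₁` is the diagonal, and for `n > 1`,
`x η_n y` iff there are `z₁, …, z_n ∈ S¹` with `x = λ_n(x,y,z₁,…,z_n)` and
`y = ρ_n(x,y,z₁,…,z_n)`. -/
def etaN (S : Type*) [Semigroup S] (n : ℕ) (x y : S) : Prop :=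
  (n = 1 ∧ x = y) ∨
  (1 < n ∧ ∃ z : ℕ → WithOne S,
    (x : WithOne S) = (malcev (x : WithOne S) (y : WithOne S) z n).1 ∧
    (y : WithOne S) = (malcev (x : WithOne S) (y : WithOne S) z n).2)

/-- `η`, the transitive closure of the union of the relations `η_n`, `n ≥ 1`. -/
def eta (S : Type*) [Semigroup S] : S → S → Prop :=
  Relation.TransGen (fun x y => ∃ n, 1 ≤ n ∧ etaN S n x y)

/-- `η*`, the smallest congruence on `S` containing `η`. -/
def etaStar (S : Type*) [Semigroup S] : Con S :=
  conGen (eta S)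

/-- A semigroup is an inverse semigroup if every element has exactly one inverse. -/
def IsInverseSemigroup (S : Type*) [Semigroup S] : Prop :=
  ∀ x : S, ∃! y : S, x * y * x = x ∧ y * x * y = y

/-- A semigroup is completely regular if every element lies in a subgroup:
for every `a` there is `b` with `aba = a`, `ab = ba` and `bab = b`. -/
def IsCompletelyRegular (S : Type*) [Semigroup S] : Prop :=
  ∀ a : S, ∃ b : S, a * b * a = a ∧ a * b = b * a ∧ b * a * b = b

/-- A (possibly empty) two-sided ideal of a semigroup. -/
def IsIdeal (S : Type*) [Semigroup S] (I : Set S) : Prop :=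
  ∀ s : S, ∀ x ∈ I, s * x ∈ I ∧ x * s ∈ I

/-- The Rees matrix semigroup `M⁰(G, n, m; P)` with zero `theta`; the sandwich
matrix entry `P j i : Option G` is `none` when the entry is `θ`. -/
inductive ReesMatrix (G : Type*) (n m : ℕ) (P : Fin m → Fin n → Option G) where
  | theta : ReesMatrix G n m P
  | elem (g : G) (i : Fin n) (j : Fin m) : ReesMatrix G n m P

namespace ReesMatrix

variable {G : Type*} [Group G] {n m : ℕ} {P : Fin m → Fin n → Option G}

/-- Multiplication: `(g;i,j)(h;k,l) = (g p_{j,k} h; i, l)` if `p_{j,k} ≠ θ`,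
and all other products are `θ`. -/
def mul : ReesMatrix G n m P → ReesMatrix G n m P → ReesMatrix G n m P
  | elem g i j, elem h k l =>
      match P j k with
      | some p => elem (g * p * h) i l
      | none => theta
  | _, _ => theta

instance : Semigroup (ReesMatrix G n m P) where
  mul := mul
  mul_assoc a b c := by
    show mul (mul a b) c = mul a (mul b c)
    rcases a with _ | ⟨g, i, j⟩ <;> rcases b with _ | ⟨h, k, l⟩ <;>
      rcases c with _ | ⟨f, r, s⟩
    all_goals try rfl
    · rcases hjk : P j k with _ | p <;> simp [mul, hjk]
    · rcases hjk : P j k with _ | p <;> rcases hlr : P l r with _ | q <;>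
        simp [mul, hjk, hlr, mul_assoc]

theorem mul_def (a b : ReesMatrix G n m P) : a * b = mul a b := rfl

instance [Finite G] : Finite (ReesMatrix G n m P) := by
  have := Fintype.ofFinite G
  exact Finite.of_surjective
    (fun x : Option (G × Fin n × Fin m) =>
      match x with
      | none => (theta : ReesMatrix G n m P)
      | some (g, i, j) => elem g i j)
    (by rintro (_ | ⟨g, i, j⟩)
        · exact ⟨none, rfl⟩
        · exact ⟨some (g, i, j), rfl⟩)

end ReesMatrix

/-- `P` is regular: every row and every column of the sandwich matrix has a
nonzero entry. -/
def IsRegularSandwich {G : Type*} {n m : ℕ} (P : Fin m → Fin n → Option G) : Prop :=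
  (∀ i : Fin n, ∃ j : Fin m, P j i ≠ none) ∧ (∀ j : Fin m, ∃ i : Fin n, P j i ≠ none)

/-- `P` is CS-diagonal: whenever `p_{r,t}`, `p_{r',t}` and `p_{r,t'}` are all
nonzero, so is `p_{r',t'}`. -/
def IsCSDiagonal {G : Type*} {n m : ℕ} (P : Fin m → Fin n → Option G) : Prop :=
  ∀ (r r' : Fin m) (t t' : Fin n),
    P r t ≠ none → P r' t ≠ none → P r t' ≠ none → P r' t' ≠ none

/-- The relation `~` on rows: `i ~ i'` iff some column `j` has `p_{j,i} ≠ θ`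
and `p_{j,i'} ≠ θ`. -/
def rowRel {G : Type*} {n m : ℕ} (P : Fin m → Fin n → Option G) (i i' : Fin n) : Prop :=
  ∃ j : Fin m, P j i ≠ none ∧ P j i' ≠ none

/-- The completely simple Rees matrix semigroup `M(G, n, m; P)` (without zero),
all sandwich entries lying in `G`. -/
inductive ReesMatrixCS (G : Type*) (n m : ℕ) (P : Fin m → Fin n → G) where
  | elem (g : G) (i : Fin n) (j : Fin m) : ReesMatrixCS G n m P

namespace ReesMatrixCS

variable {G : Type*} [Group G] {n m : ℕ} {P : Fin m → Fin n → G}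

instance : Semigroup (ReesMatrixCS G n m P) where
  mul a b := match a, b with
    | elem g i j, elem h k l => elem (g * P j k * h) i l
  mul_assoc a b c := by
    rcases a with ⟨g, i, j⟩; rcases b with ⟨h, k, l⟩; rcases c with ⟨f, r, s⟩
    show elem _ _ _ = elem _ _ _
    simp [mul_assoc]

instance [Finite G] : Finite (ReesMatrixCS G n m P) := by
  have := Fintype.ofFinite G
  exact Finite.of_surjective
    (fun x : G × Fin n × Fin m => elem x.1 x.2.1 x.2.2)
    (by rintro ⟨g, i, j⟩; exact ⟨(g, i, j), rfl⟩)

end ReesMatrixCS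

/-- A principal series of a finite semigroup `S`:
`S = C 1 ⊃ C 2 ⊃ … ⊃ C o ⊃ C (o+1) = ∅`, each `C p` an ideal of `S` with
no ideal of `S` strictly between consecutive terms. -/
structure PrincipalSeries (S : Type*) [Semigroup S] where
  o : ℕ
  ho : 1 ≤ o
  C : ℕ → Set S
  first : C 1 = Set.univ
  last : C (o + 1) = ∅
  isIdeal : ∀ p, 1 ≤ p → p ≤ o → IsIdeal S (C p)
  strict : ∀ p, 1 ≤ p → p ≤ o → C (p + 1) ⊂ C p
  max : ∀ p, 1 ≤ p → p ≤ o → ∀ I : Set S, IsIdeal S I →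
    C (p + 1) ⊆ I → I ⊆ C p → I = C (p + 1) ∨ I = C p

/-- `f` realises the Rees factor `A/B` (the Rees quotient of `A` by the ideal `B`;
if `B = ∅` the factor is `A` itself) as the Rees matrix semigroup with zero
`M⁰(H, n', m'; Q)`. -/
def IsReesFactorM0 {S : Type*} [Semigroup S] (A B : Set S)
    {H : Type*} [Group H] {n' m' : ℕ} (Q : Fin m' → Fin n' → Option H)
    (f : S → ReesMatrix H n' m' Q) : Prop :=
  (∀ x ∈ A, ∀ y ∈ A, f (x * y) = f x * f y) ∧
  ((B = ∅ ∧ Set.BijOn f A Set.univ) ∨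
   (B ≠ ∅ ∧ (∀ x ∈ B, f x = ReesMatrix.theta) ∧
     (∀ x ∈ A \ B, f x ≠ ReesMatrix.theta) ∧
     Set.InjOn f (A \ B) ∧
     (∀ w : ReesMatrix H n' m' Q, w ≠ ReesMatrix.theta → ∃ x ∈ A \ B, f x = w)))

/-- `f` realises `A` as the completely simple Rees matrix semigroup
`M(H, n', m'; Q)` (without zero). -/
def IsReesFactorCS {S : Type*} [Semigroup S] (A : Set S)
    {H : Type*} [Group H] {n' m' : ℕ} (Q : Fin m' → Fin n' → H)
    (f : S → ReesMatrixCS H n' m' Q) : Prop :=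
  (∀ x ∈ A, ∀ y ∈ A, f (x * y) = f x * f y) ∧ Set.BijOn f A Set.univ

/-- `malcev` only depends on `z` at indices `1, …, n`. -/
lemma malcev_congr {M : Type*} [Monoid M] (x y : M) (z z' : ℕ → M) (n : ℕ)
    (h : ∀ t, 1 ≤ t → t ≤ n → z t = z' t) :
    malcev x y z n = malcev x y z' n := by
  induction n with
  | zero => rfl
  | succ k ih =>
    have ih' := ih (fun t h1 h2 => h t h1 (h2.trans (Nat.le_succ k)))
    simp [malcev, ih', h (k + 1) (Nat.succ_le_succ (Nat.zero_le k)) le_rfl]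

/-- Composition law for the Mal'cev words. -/
lemma malcev_add {M : Type*} [Monoid M] (x y : M) (z : ℕ → M) (i k : ℕ) :
    malcev x y z (i + k) =
      malcev (malcev x y z i).1 (malcev x y z i).2 (fun t => z (i + t)) k := by
  induction k with
  | zero => rfl
  | succ k ih =>
    show malcev x y z (i + k + 1) = _
    simp only [malcev, ih]
    have : i + k + 1 = i + (k + 1) := by omega
    rw [this]

/-- Once `λ_n = ρ_n`, equality persists forever. -/
lemma malcev_eq_propagate {M : Type*} [Monoid M] (x y : M) (z : ℕ → M) (n k : ℕ)
    (h : (malcev x y z n).1 = (malcev x y z n).2) :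
    (malcev x y z (n + k)).1 = (malcev x y z (n + k)).2 := by
  induction k with
  | zero => exact h
  | succ k ih => simp [malcev, ih]

/-- The Mal'cev words of elements of `S` stay in (the image of) `S` in `S¹`. -/
lemma malcev_coe {S : Type*} [Semigroup S] (a b : S) (z : ℕ → WithOne S) (k : ℕ) :
    ∃ s t : S, malcev (a : WithOne S) (b : WithOne S) z k = (↑s, ↑t) := by
  induction k with
  | zero => exact ⟨a, b, rfl⟩
  | succ k ih =>
    obtain ⟨s, t, h⟩ := ih
    have key : ∀ (u v : S) (c : WithOne S), ∃ r : S, (u : WithOne S) * c * v = ↑r := by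
      intro u v c
      induction c using WithOne.cases_on
      · exact ⟨u * v, by simp⟩
      · intro c; exact ⟨u * c * v, by simp [← WithOne.coe_mul]⟩
    obtain ⟨r, hr⟩ := key s t (z (k + 1))
    obtain ⟨r', hr'⟩ := key t s (z (k + 1))
    exact ⟨r, r', by simp [malcev, h, hr, hr']⟩

/-- A finite semigroup `S` is not Mal'cev nilpotent iff there exist a
positive integer `m`, distinct `x y ∈ S` and `w₁, …, w_m ∈ S¹` with
`x = λ_m(x,y,w₁,…,w_m)` and `y = ρ_m(x,y,w₁,…,w_m)`. -/
theorem not_malcevNilpotent_iff (S : Type*) [Semigroup S] [Finite S] :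
    ¬ MalcevNilpotent S ↔
      ∃ m : ℕ, 0 < m ∧ ∃ x y : S, x ≠ y ∧ ∃ w : ℕ → WithOne S,
        (x : WithOne S) = (malcev (x : WithOne S) (y : WithOne S) w m).1 ∧
        (y : WithOne S) = (malcev (x : WithOne S) (y : WithOne S) w m).2 := by
  constructor
  · -- ⇒ : pigeonhole on the sequence of pairs (λ_k, ρ_k)
    intro h
    have : Fintype S := Fintype.ofFinite S
    have hfin : Finite (WithOne S) :=
      Finite.of_surjective (fun o : Option S => o.elim 1 (fun s => (s : WithOne S)))
        (fun x => by
          induction x using WithOne.cases_on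
          · exact ⟨none, rfl⟩
          · intro c; exact ⟨some c, rfl⟩)
    have : Fintype (WithOne S × WithOne S) := Fintype.ofFinite _
    set N := Fintype.card (WithOne S × WithOne S) with hN
    obtain ⟨a, b, z, hne⟩ :
        ∃ (a b : S) (z : ℕ → WithOne S),
          (malcev (a : WithOne S) (b : WithOne S) z (N + 1)).1 ≠
          (malcev (a : WithOne S) (b : WithOne S) z (N + 1)).2 := by
      by_contra hc
      push_neg at hc
      exact h ⟨N + 1, Nat.succ_pos _, hc⟩
    have hcard : Fintype.card (WithOne S × WithOne S) < Fintype.card (Fin (N + 2)) := by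
      simp [hN]
    obtain ⟨i, j, hij, heq⟩ :=
      Fintype.exists_ne_map_eq_of_card_lt
        (fun k : Fin (N + 2) => malcev (a : WithOne S) (b : WithOne S) z (k : ℕ)) hcard
    -- wlog i < j
    wlog hlt : (i : ℕ) < (j : ℕ) generalizing i j
    · exact this j i hij.symm heq.symm
        (lt_of_le_of_ne (Nat.le_of_not_lt hlt) (fun e => hij (Fin.ext e.symm)))
    -- λ_i ≠ ρ_i
    have hneq_i : (malcev (a : WithOne S) (b : WithOne S) z (i : ℕ)).1 ≠
        (malcev (a : WithOne S) (b : WithOne S) z (i : ℕ)).2 := by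
      intro he
      have hi : (i : ℕ) ≤ N + 1 := Nat.lt_succ_iff.mp i.isLt
      have := malcev_eq_propagate (a : WithOne S) (b : WithOne S) z (i : ℕ)
        (N + 1 - (i : ℕ)) he
      rw [Nat.add_sub_cancel' hi] at this
      exact hne this
    obtain ⟨s, t, hst⟩ := malcev_coe a b z (i : ℕ)
    have hst_ne : s ≠ t := by
      intro e; apply hneq_i; rw [hst, e]
    refine ⟨(j : ℕ) - (i : ℕ), by omega, s, t, hst_ne, fun u => z ((i : ℕ) + u), ?_, ?_⟩
    · have := malcev_add (a : WithOne S) (b : WithOne S) z (i : ℕ) ((j : ℕ) - (i : ℕ))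
      rw [Nat.add_sub_cancel' hlt.le] at this
      have h2 : malcev ((s : WithOne S)) ((t : WithOne S))
          (fun u => z ((i : ℕ) + u)) ((j : ℕ) - (i : ℕ)) = (↑s, ↑t) := by
        calc malcev ((s : WithOne S)) ((t : WithOne S))
              (fun u => z ((i : ℕ) + u)) ((j : ℕ) - (i : ℕ))
            = malcev (a : WithOne S) (b : WithOne S) z (j : ℕ) := by
              rw [this, hst]
          _ = (↑s, ↑t) := by rw [← heq, hst]
      rw [h2]
    · have := malcev_add (a : WithOne S) (b : WithOne S) z (i : ℕ) ((j : ℕ) - (i : ℕ))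
      rw [Nat.add_sub_cancel' hlt.le] at this
      have h2 : malcev ((s : WithOne S)) ((t : WithOne S))
          (fun u => z ((i : ℕ) + u)) ((j : ℕ) - (i : ℕ)) = (↑s, ↑t) := by
        calc malcev ((s : WithOne S)) ((t : WithOne S))
              (fun u => z ((i : ℕ) + u)) ((j : ℕ) - (i : ℕ))
            = malcev (a : WithOne S) (b : WithOne S) z (j : ℕ) := by
              rw [this, hst]
          _ = (↑s, ↑t) := by rw [← heq, hst]
      rw [h2]
  · -- ⇐ : iterate the fixed point
    rintro ⟨m, hm, x, y, hxy, w, hx, hy⟩ ⟨n, hn, hnil⟩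
    set w' : ℕ → WithOne S := fun t => w ((t - 1) % m + 1) with hw'
    have hfix : malcev (x : WithOne S) (y : WithOne S) w m = (↑x, ↑y) := by
      ext
      · exact hx.symm
      · exact hy.symm
    have key : ∀ k : ℕ, malcev (x : WithOne S) (y : WithOne S) w' (k * m) = (↑x, ↑y) := by
      intro k
      induction k with
      | zero => simp only [Nat.zero_mul]; rfl
      | succ k ih =>
        have hadd : (k + 1) * m = k * m + m := by ring
        rw [hadd, malcev_add, ih]
        have hcongr : malcev (x : WithOne S) (y : WithOne S)
            (fun t => w' (k * m + t)) m = malcev (x : WithOne S) (y : WithOne S) w m := by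
          apply malcev_congr
          intro t ht1 ht2
          show w ((k * m + t - 1) % m + 1) = w t
          congr 1
          have h1 : k * m + t - 1 = k * m + (t - 1) := by omega
          rw [h1, Nat.mul_comm, Nat.mul_add_mod]
          have : (t - 1) % m = t - 1 := Nat.mod_eq_of_lt (by omega)
          omega
        simpa [hcongr] using hfix
    -- propagate nilpotency equality at n to n*m
    have hnm : n ≤ n * m := Nat.le_mul_of_pos_right n hm
    have heq := malcev_eq_propagate (x : WithOne S) (y : WithOne S) w' n (n * m - n)
      (hnil x y w')
    rw [Nat.add_sub_cancel' hnm, key n] at heq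
    exact hxy (WithOne.coe_inj.mp heq)
end

section
/- For every finite semigroup S, the quotient semigroup S/η* is Mal'cev nilpotent. -/


theorem aux_withOne_mul_ne_one {S : Type*} [Semigroup S] {a : WithOne S} (b : WithOne S)
    (ha : a ≠ 1) : a * b ≠ 1 := by
  obtain ⟨s, rfl⟩ := WithOne.ne_one_iff_exists.mp ha
  by_cases hb : b = 1
  · subst hb; simpa using ha
  · obtain ⟨t, rfl⟩ := WithOne.ne_one_iff_exists.mp hb
    rw [← WithOne.coe_mul]; exact WithOne.coe_ne_one

theorem aux_malcev_ne_one {S : Type*} [Semigroup S] {x y : WithOne S}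
    (hx : x ≠ 1) (hy : y ≠ 1) (z : ℕ → WithOne S) :
    ∀ n, (malcev x y z n).1 ≠ 1 ∧ (malcev x y z n).2 ≠ 1
  | 0 => ⟨hx, hy⟩
  | n + 1 => by
    obtain ⟨h1, h2⟩ := aux_malcev_ne_one hx hy z n
    exact ⟨aux_withOne_mul_ne_one _ (aux_withOne_mul_ne_one _ h1),
           aux_withOne_mul_ne_one _ (aux_withOne_mul_ne_one _ h2)⟩

theorem aux_malcev_comp {M : Type*} [Monoid M] (x y : M) (z : ℕ → M) (k : ℕ) :
    ∀ j, malcev x y z (k + j) =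
      malcev (malcev x y z k).1 (malcev x y z k).2 (fun i => z (k + i)) j
  | 0 => rfl
  | j + 1 => by
    show malcev x y z ((k + j) + 1) = _
    rw [malcev, malcev, aux_malcev_comp x y z k j]
    rfl

theorem aux_malcev_congr {M : Type*} [Monoid M] (x y : M) {z z' : ℕ → M} :
    ∀ n, (∀ i, 1 ≤ i → i ≤ n → z i = z' i) → malcev x y z n = malcev x y z' n
  | 0, _ => rfl
  | n + 1, h => by
    rw [malcev, malcev, aux_malcev_congr x y n (fun i h1 h2 => h i h1 (by omega)),
      h (n + 1) (by omega) le_rfl]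

theorem aux_malcev_map {M N : Type*} [Monoid M] [Monoid N] (f : M →* N) (x y : M) (z : ℕ → M) :
    ∀ n, malcev (f x) (f y) (fun i => f (z i)) n = (f (malcev x y z n).1, f (malcev x y z n).2)
  | 0 => rfl
  | n + 1 => by
    rw [malcev, malcev, aux_malcev_map f x y z n]
    simp [map_mul]

theorem aux_malcev_persist {M : Type*} [Monoid M] {x y : M} {z : ℕ → M} {n : ℕ}
    (h : (malcev x y z n).1 = (malcev x y z n).2) :
    ∀ d, (malcev x y z (n + d)).1 = (malcev x y z (n + d)).2
  | 0 => h
  | d + 1 => by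
    show (malcev x y z ((n + d) + 1)).1 = (malcev x y z ((n + d) + 1)).2
    rw [malcev, aux_malcev_persist h d]

theorem aux_malcev_per_step {M : Type*} [Monoid M] (x y : M) (w : ℕ → M) {m : ℕ} (hm : 1 ≤ m)
    (r : ℕ) :
    malcev x y (fun j => w ((j - 1) % m + 1)) ((r + 1) * m) =
      malcev (malcev x y (fun j => w ((j - 1) % m + 1)) (r * m)).1
             (malcev x y (fun j => w ((j - 1) % m + 1)) (r * m)).2 w m := by
  have h1 : (r + 1) * m = r * m + m := by ring
  rw [h1, aux_malcev_comp]
  refine aux_malcev_congr _ _ m (fun i hi1 hi2 => ?_)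
  show w ((r * m + i - 1) % m + 1) = w i
  have h2 : (r * m + i - 1) % m + 1 = i := by
    have h3 : r * m + i - 1 = (i - 1) + r * m := by omega
    rw [h3, Nat.add_mul_mod_self_right, Nat.mod_eq_of_lt (by omega)]
    omega
  rw [h2]

theorem aux_malcev_periodic {M : Type*} [Monoid M] {x y : M} {w : ℕ → M} {m : ℕ} (hm : 1 ≤ m)
    (H : malcev x y w m = (x, y)) :
    ∀ r, malcev x y (fun j => w ((j - 1) % m + 1)) (r * m) = (x, y)
  | 0 => by rw [Nat.zero_mul]; rfl
  | r + 1 => by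
    rw [aux_malcev_per_step x y w hm r, aux_malcev_periodic hm H r]
    exact H

theorem aux_withOne_finite {α : Type*} [Finite α] : Finite (WithOne α) := by
  have := Fintype.ofFinite α
  have h : Fintype (Option α) := inferInstance
  exact @Finite.of_fintype (WithOne α) h

/-- For every finite semigroup `S`, the quotient `S/η*` is
Mal'cev nilpotent. -/
theorem malcevNilpotent_quotient_etaStar (S : Type*) [Semigroup S] [Finite S] :
    MalcevNilpotent (etaStar S).Quotient := by
  classical
  haveI : Finite (etaStar S).Quotient := Quotient.finite _
  haveI : Finite (WithOne (etaStar S).Quotient) := aux_withOne_finite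
  haveI : Finite (WithOne S) := aux_withOne_finite
  haveI fT : Fintype (WithOne (etaStar S).Quotient × WithOne (etaStar S).Quotient) :=
    Fintype.ofFinite _
  haveI fS : Fintype (WithOne S × WithOne S) := Fintype.ofFinite _
  set T := (etaStar S).Quotient with hT
  set N := Fintype.card (WithOne T × WithOne T) with hN
  refine ⟨N, Fintype.card_pos, ?_⟩
  intro a b z
  by_contra hne
  have hall : ∀ k, k ≤ N → (malcev (a : WithOne T) (b : WithOne T) z k).1 ≠
      (malcev (a : WithOne T) (b : WithOne T) z k).2 := by
    intro k hk h
    have h2 := aux_malcev_persist h (N - k)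
    rw [Nat.add_sub_cancel' hk] at h2
    exact hne h2
  obtain ⟨i, j, hij, hmap⟩ := Fintype.exists_ne_map_eq_of_card_lt
      (fun i : Fin (N + 1) => malcev (a : WithOne T) (b : WithOne T) z i)
      (by rw [Fintype.card_fin]; exact Nat.lt_succ_self N)
  obtain ⟨k, l, hkl, hlN, heq⟩ : ∃ k l : ℕ, k < l ∧ l ≤ N ∧
      malcev (a : WithOne T) (b : WithOne T) z k =
        malcev (a : WithOne T) (b : WithOne T) z l := by
    rcases hij.lt_or_gt with h | h
    · exact ⟨i, j, Fin.lt_def.mp h, Nat.lt_succ_iff.mp j.isLt, hmap⟩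
    · exact ⟨j, i, Fin.lt_def.mp h, Nat.lt_succ_iff.mp i.isLt, hmap.symm⟩
  set m := l - k with hm
  have hm1 : 1 ≤ m := by omega
  set x := (malcev (a : WithOne T) (b : WithOne T) z k).1 with hx
  set y := (malcev (a : WithOne T) (b : WithOne T) z k).2 with hy
  have hxy : x ≠ y := hall k (by omega)
  have hfix : malcev x y (fun i => z (k + i)) m = (x, y) := by
    have h1 := aux_malcev_comp (a : WithOne T) (b : WithOne T) z k m
    rw [show k + m = l by omega, ← heq] at h1
    rw [← h1, hx, hy]
  obtain ⟨hx1, hy1⟩ := aux_malcev_ne_one (WithOne.coe_ne_one) (WithOne.coe_ne_one) z k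
  obtain ⟨x', hx'⟩ := WithOne.ne_one_iff_exists.mp (show x ≠ 1 from hx1)
  obtain ⟨y', hy'⟩ := WithOne.ne_one_iff_exists.mp (show y ≠ 1 from hy1)
  set π : S →ₙ* T := ⟨fun s => (s : T), fun _ _ => rfl⟩ with hπ
  set φ : WithOne S →* WithOne T := WithOne.mapMulHom π with hφ
  have hφcoe : ∀ s : S, φ (s : WithOne S) = ((s : T) : WithOne T) := by
    intro s; rw [hφ, WithOne.mapMulHom_coe]; rfl
  have hφsurj : ∀ t : WithOne T, ∃ s : WithOne S, φ s = t := by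
    intro t
    by_cases ht : t = 1
    · exact ⟨1, by rw [map_one, ht]⟩
    · obtain ⟨t', rfl⟩ := WithOne.ne_one_iff_exists.mp ht
      obtain ⟨s, hs⟩ := Quotient.exists_rep t'
      refine ⟨(s : WithOne S), ?_⟩
      rw [hφcoe]
      congr 1
  obtain ⟨u1, hu1⟩ := Quotient.exists_rep x'
  obtain ⟨v1, hv1⟩ := Quotient.exists_rep y'
  have hφu : φ (u1 : WithOne S) = x := by
    rw [hφcoe, ← hx']; congr 1
  have hφv : φ (v1 : WithOne S) = y := by
    rw [hφcoe, ← hy']; congr 1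
  choose w0 hw0 using fun i : ℕ => hφsurj (z (k + i))
  set zp : ℕ → WithOne S := fun jj => w0 ((jj - 1) % m + 1) with hzp
  set q : ℕ → WithOne S × WithOne S :=
    fun r => malcev (u1 : WithOne S) (v1 : WithOne S) zp (r * m) with hq
  have himg : ∀ r, (φ (q r).1, φ (q r).2) = (x, y) := by
    intro r
    rw [hq]
    rw [← aux_malcev_map φ (u1 : WithOne S) (v1 : WithOne S) zp (r * m)]
    rw [hφu, hφv]
    have hfun : (fun i => φ (zp i)) =
        fun jj => (fun i => z (k + i)) ((jj - 1) % m + 1) := by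
      funext jj
      exact hw0 _
    rw [hfun]
    exact aux_malcev_periodic hm1 hfix r
  obtain ⟨i2, j2, hij2, hmap2⟩ := Fintype.exists_ne_map_eq_of_card_lt
      (fun r : Fin (Fintype.card (WithOne S × WithOne S) + 1) => q r)
      (by rw [Fintype.card_fin]; exact Nat.lt_succ_self _)
  obtain ⟨p, p', hpp', hqpp'⟩ : ∃ p p' : ℕ, p < p' ∧ q p = q p' := by
    rcases hij2.lt_or_gt with h | h
    · exact ⟨i2, j2, Fin.lt_def.mp h, hmap2⟩
    · exact ⟨j2, i2, Fin.lt_def.mp h, hmap2.symm⟩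
  set d := p' - p with hd
  have hd1 : 1 ≤ d := by omega
  have hstep : ∀ r, q (r + 1) = malcev (q r).1 (q r).2 w0 m :=
    fun r => aux_malcev_per_step (u1 : WithOne S) (v1 : WithOne S) w0 hm1 r
  have hshift : ∀ t, q (p + t) = q (p' + t) := by
    intro t
    induction t with
    | zero => exact hqpp'
    | succ t ih =>
      show q ((p + t) + 1) = q ((p' + t) + 1)
      rw [hstep, hstep, ih]
  have hq2 : q p = q (p + 2 * d) := by
    have h1 := hshift d
    rw [show p + d = p' by omega] at h1
    rw [hqpp', h1, show p' + d = p + 2 * d by omega]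
  set n := 2 * d * m with hn
  have hn2 : 1 < n := by
    have h1 : 1 * 1 ≤ d * m := Nat.mul_le_mul hd1 hm1
    rw [hn, mul_assoc]
    omega
  have hkey : malcev (q p).1 (q p).2 (fun i => zp (p * m + i)) n = q p := by
    have h1 := aux_malcev_comp (u1 : WithOne S) (v1 : WithOne S) zp (p * m) n
    rw [show p * m + n = (p + 2 * d) * m by rw [hn]; ring] at h1
    have h2 : q (p + 2 * d) = malcev (q p).1 (q p).2 (fun i => zp (p * m + i)) n := by
      rw [hq]; exact h1
    rw [← h2, ← hq2]
  obtain ⟨hu1ne, hv1ne⟩ :=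
    aux_malcev_ne_one (WithOne.coe_ne_one) (WithOne.coe_ne_one) zp (p * m)
  obtain ⟨u', hu'⟩ := WithOne.ne_one_iff_exists.mp (show (q p).1 ≠ 1 from hu1ne)
  obtain ⟨v', hv'⟩ := WithOne.ne_one_iff_exists.mp (show (q p).2 ≠ 1 from hv1ne)
  have hmal : malcev ((u' : WithOne S)) ((v' : WithOne S)) (fun i => zp (p * m + i)) n =
      ((u' : WithOne S), (v' : WithOne S)) := by
    rw [hu', hv']
    exact hkey.trans Prod.mk.eta.symm
  have hetaN : etaN S n u' v' :=
    Or.inr ⟨hn2, fun i => zp (p * m + i), (congrArg Prod.fst hmal).symm,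
      (congrArg Prod.snd hmal).symm⟩
  have heta : eta S u' v' := Relation.TransGen.single ⟨n, by omega, hetaN⟩
  have hcon : etaStar S u' v' := ConGen.Rel.of _ _ heta
  have hquot : (u' : T) = (v' : T) := ((etaStar S).eq).mpr hcon
  apply hxy
  have h1 : φ (q p).1 = x := congrArg Prod.fst (himg p)
  have h2 : φ (q p).2 = y := congrArg Prod.snd (himg p)
  rw [← h1, ← h2, ← hu', ← hv', hφcoe, hφcoe, hquot]
end

section
/- Let M = M⁰(G,n,m;P) be a Rees matrix semigroup over a group G. If p_{j,i} ≠ θ and p_{j',i} ≠ θ for some row i and columns j, j', then (p_{j,i}⁻¹; i, j) η₂ (p_{j',i}⁻¹; i, j'); explicitly, taking z₁ = z₂ = 1 ∈ M¹ one has (p_{j,i}⁻¹;i,j) = λ₂((p_{j,i}⁻¹;i,j),(p_{j',i}⁻¹;i,j'),1,1) and (p_{j',i}⁻¹;i,j') = ρ₂((p_{j,i}⁻¹;i,j),(p_{j',i}⁻¹;i,j'),1,1). -/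
/-- In a Rees matrix semigroup `M⁰(G,n,m;P)`, if `p_{j,i} ≠ θ` and
`p_{j',i} ≠ θ`, then `(p_{j,i}⁻¹;i,j) η₂ (p_{j',i}⁻¹;i,j')`, witnessed by
`z₁ = z₂ = 1`. -/
theorem etaTwo_of_same_row {G : Type*} [Group G] {n m : ℕ}
    {P : Fin m → Fin n → Option G} (i : Fin n) (j j' : Fin m) (p q : G)
    (hj : P j i = some p) (hj' : P j' i = some q) :
    ((ReesMatrix.elem p⁻¹ i j : ReesMatrix G n m P) : WithOne (ReesMatrix G n m P)) =
      (malcev ((ReesMatrix.elem p⁻¹ i j : ReesMatrix G n m P) : WithOne (ReesMatrix G n m P))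
        ((ReesMatrix.elem q⁻¹ i j' : ReesMatrix G n m P) : WithOne (ReesMatrix G n m P))
        (fun _ => 1) 2).1 ∧
    ((ReesMatrix.elem q⁻¹ i j' : ReesMatrix G n m P) : WithOne (ReesMatrix G n m P)) =
      (malcev ((ReesMatrix.elem p⁻¹ i j : ReesMatrix G n m P) : WithOne (ReesMatrix G n m P))
        ((ReesMatrix.elem q⁻¹ i j' : ReesMatrix G n m P) : WithOne (ReesMatrix G n m P))
        (fun _ => 1) 2).2 ∧
    etaN (ReesMatrix G n m P) 2
      (ReesMatrix.elem p⁻¹ i j) (ReesMatrix.elem q⁻¹ i j') := by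

  have key : ∀ z : ℕ → WithOne (ReesMatrix G n m P),
      True := fun _ => trivial
  have hxy : (ReesMatrix.elem p⁻¹ i j : ReesMatrix G n m P) *
      ReesMatrix.elem q⁻¹ i j' = ReesMatrix.elem q⁻¹ i j' := by
    simp [ReesMatrix.mul_def, ReesMatrix.mul, hj]
  have hyx : (ReesMatrix.elem q⁻¹ i j' : ReesMatrix G n m P) *
      ReesMatrix.elem p⁻¹ i j = ReesMatrix.elem p⁻¹ i j := by
    simp [ReesMatrix.mul_def, ReesMatrix.mul, hj']
  set x : ReesMatrix G n m P := ReesMatrix.elem p⁻¹ i j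
  set y : ReesMatrix G n m P := ReesMatrix.elem q⁻¹ i j'
  have h1 : ((x : WithOne (ReesMatrix G n m P)) = (malcev (x : WithOne (ReesMatrix G n m P)) y (fun _ => 1) 2).1) := by
    show (x : WithOne (ReesMatrix G n m P)) = (x*1*y)*1*(y*1*x)
    simp only [mul_one]
    rw [← WithOne.coe_mul, ← WithOne.coe_mul, hxy, hyx, ← WithOne.coe_mul, hyx]
  have h2 : ((y : WithOne (ReesMatrix G n m P)) = (malcev (x : WithOne (ReesMatrix G n m P)) y (fun _ => 1) 2).2) := by
    show (y : WithOne (ReesMatrix G n m P)) = (y*1*x)*1*(x*1*y)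
    simp only [mul_one]
    rw [← WithOne.coe_mul, ← WithOne.coe_mul, hxy, hyx, ← WithOne.coe_mul, hxy]
  exact ⟨h1, h2, Or.inr ⟨one_lt_two, fun _ => 1, h1, h2⟩⟩
end

section
/- Let M = M⁰(G,n,m;P) be a finite regular Rees matrix semigroup. If M is not CS-diagonal, then every element of M is η*-related to θ; equivalently, the quotient M/η* is the trivial one-element semigroup. -/
section Helpers
variable {G : Type*} [Group G] {n m : ℕ} {P : Fin m → Fin n → Option G}

theorem RM.elem_mul_some {j : Fin m} {k : Fin n} {p : G} (hp : P j k = some p)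
    (g h : G) (i : Fin n) (l : Fin m) :
    (ReesMatrix.elem g i j : ReesMatrix G n m P) * ReesMatrix.elem h k l =
      ReesMatrix.elem (g * p * h) i l := by
  show ReesMatrix.mul _ _ = _
  simp only [ReesMatrix.mul, hp]

theorem RM.elem_mul_none {j : Fin m} {k : Fin n} (hp : P j k = none)
    (g h : G) (i : Fin n) (l : Fin m) :
    (ReesMatrix.elem g i j : ReesMatrix G n m P) * ReesMatrix.elem h k l =
      ReesMatrix.theta := by
  show ReesMatrix.mul _ _ = _
  simp only [ReesMatrix.mul, hp]

theorem RM.mul_theta (a : ReesMatrix G n m P) : a * ReesMatrix.theta = ReesMatrix.theta := by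
  cases a <;> rfl

end Helpers

/-- If a finite regular Rees matrix semigroup `M⁰(G,n,m;P)` is not
CS-diagonal, then every element is `η*`-related to `θ`; equivalently, `M/η*` is
the trivial one-element semigroup. -/
theorem etaStar_theta_of_not_csDiagonal (G : Type*) [Group G] [Finite G]
    (n m : ℕ) (hn : 0 < n) (hm : 0 < m) (P : Fin m → Fin n → Option G)
    (hreg : IsRegularSandwich P) (hnot : ¬ IsCSDiagonal P) :
    (∀ x : ReesMatrix G n m P,
      etaStar (ReesMatrix G n m P) x ReesMatrix.theta) ∧
    Subsingleton (etaStar (ReesMatrix G n m P)).Quotient := by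
  classical
  set S := ReesMatrix G n m P with hS
  simp only [IsCSDiagonal, not_forall] at hnot
  obtain ⟨r, r', t, t', hrt, hr't, hrt', hr't'⟩ := hnot
  rw [not_not] at hr't'
  obtain ⟨p₀, hp₀⟩ := Option.ne_none_iff_exists'.mp hrt
  obtain ⟨p₁, hp₁⟩ := Option.ne_none_iff_exists'.mp hr't
  obtain ⟨p₂, hp₂⟩ := Option.ne_none_iff_exists'.mp hrt'
  set x : S := ReesMatrix.elem p₁⁻¹ t r' with hx
  set y : S := ReesMatrix.elem p₂⁻¹ t' r with hy
  set zc : S := ReesMatrix.elem p₀⁻¹ t r with hzc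
  have h1 : etaN S 2 x y := by
    refine Or.inr ⟨one_lt_two, fun _ => (zc : WithOne S), ?_, ?_⟩
    · show (x : WithOne S) =
        ((x : WithOne S) * zc * y) * zc * ((y : WithOne S) * zc * x)
      simp only [← WithOne.coe_mul, WithOne.coe_inj]
      show x = x * zc * y * zc * (y * zc * x)
      rw [hx, hy, hzc]
      simp only [RM.elem_mul_some hp₀, RM.elem_mul_some hp₁, RM.elem_mul_some hp₂]
      congr 1
      group
    · show (y : WithOne S) =
        ((y : WithOne S) * zc * x) * zc * ((x : WithOne S) * zc * y)
      simp only [← WithOne.coe_mul, WithOne.coe_inj]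
      show y = y * zc * x * zc * (x * zc * y)
      rw [hx, hy, hzc]
      simp only [RM.elem_mul_some hp₀, RM.elem_mul_some hp₁, RM.elem_mul_some hp₂]
      congr 1
      group
  have h2 : eta S x y := Relation.TransGen.single ⟨2, by norm_num, h1⟩
  have h3 : etaStar S x y := ConGen.Rel.of _ _ h2
  have hkey : ∀ (g : G) (j₀ : Fin m),
      etaStar S (ReesMatrix.elem g t' j₀) ReesMatrix.theta := by
    intro g j₀
    have h4 := (etaStar S).mul h3 ((etaStar S).refl (ReesMatrix.elem g t' j₀))
    have hxw : x * ReesMatrix.elem g t' j₀ = ReesMatrix.theta := by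
      rw [hx, RM.elem_mul_none hr't']
    have hyw : y * ReesMatrix.elem g t' j₀ = ReesMatrix.elem g t' j₀ := by
      rw [hy, RM.elem_mul_some hp₂]
      congr 1
      group
    rw [hxw, hyw] at h4
    exact h4.symm
  have hmain : ∀ u : S, etaStar S u ReesMatrix.theta := by
    intro u
    rcases u with _ | ⟨g, i, j⟩
    · exact (etaStar S).refl _
    · obtain ⟨jL, hjL⟩ := hreg.1 t'
      obtain ⟨q, hq⟩ := Option.ne_none_iff_exists'.mp hjL
      have hfac : (ReesMatrix.elem g i j : S) =
          (ReesMatrix.elem (g * q⁻¹) i jL : S) * ReesMatrix.elem (1 : G) t' j := by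
        rw [RM.elem_mul_some hq]
        congr 1
        group
      have h5 := (etaStar S).mul
        ((etaStar S).refl (ReesMatrix.elem (g * q⁻¹) i jL)) (hkey 1 j)
      have htheta : ReesMatrix.elem (g * q⁻¹) i jL *
          (ReesMatrix.theta : S) = ReesMatrix.theta := RM.mul_theta _
      rw [htheta] at h5
      rw [hfac]
      exact h5
  refine ⟨hmain, ?_⟩
  constructor
  intro a b
  induction a using Quotient.inductionOn' with
  | h u =>
    induction b using Quotient.inductionOn' with
    | h v =>
      show ((u : (etaStar S).Quotient) = v)
      exact Con.eq _ |>.mpr ((hmain u).trans ((hmain v).symm))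
end

section
/- Let M = M⁰(G,n,m;P) be a finite regular Rees matrix semigroup which is CS-diagonal. Then the quotient semigroup M/η* is an inverse semigroup. -/
section Aux

namespace ReesMatrix

variable {G : Type*} [Group G] {n m : ℕ} {P : Fin m → Fin n → Option G}

theorem theta_mul (x : ReesMatrix G n m P) : (theta : ReesMatrix G n m P) * x = theta := by
  cases x <;> rfl

theorem mul_theta (x : ReesMatrix G n m P) : x * (theta : ReesMatrix G n m P) = theta := by
  cases x <;> rfl

theorem mul_elem_some {i k : Fin n} {j l : Fin m} {g h p : G} (hp : P j k = some p) :
    (elem g i j : ReesMatrix G n m P) * elem h k l = elem (g * p * h) i l := by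
  show mul _ _ = _
  simp [mul, hp]

theorem mul_elem_none {i k : Fin n} {j l : Fin m} {g h : G} (hp : P j k = none) :
    (elem g i j : ReesMatrix G n m P) * elem h k l = theta := by
  show mul _ _ = _
  simp [mul, hp]

/-- The Rees matrix semigroup is regular. -/
theorem exists_inv (hreg : IsRegularSandwich P) (x : ReesMatrix G n m P) :
    ∃ y, x * y * x = x ∧ y * x * y = y := by
  cases x with
  | theta => exact ⟨theta, rfl, rfl⟩
  | elem g i j =>
    obtain ⟨k, hk⟩ := hreg.2 j
    obtain ⟨l, hl⟩ := hreg.1 i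
    obtain ⟨u, hu⟩ : ∃ u, P j k = some u := Option.ne_none_iff_exists'.mp hk
    obtain ⟨v, hv⟩ : ∃ v, P l i = some v := Option.ne_none_iff_exists'.mp hl
    refine ⟨elem (u⁻¹ * g⁻¹ * v⁻¹) k l, ?_, ?_⟩
    · rw [mul_elem_some hu, mul_elem_some hv]
      congr 1
      group
    · rw [mul_elem_some hv, mul_elem_some hu]
      congr 1
      group

/-- Classification of idempotents. -/
theorem idem_cases {e : ReesMatrix G n m P} (he : e * e = e) :
    e = theta ∨ ∃ (i : Fin n) (j : Fin m) (p : G), P j i = some p ∧ e = elem p⁻¹ i j := by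
  cases e with
  | theta => exact Or.inl rfl
  | elem g i j =>
    right
    rcases hp : P j i with _ | p
    · rw [mul_elem_none hp] at he
      exact absurd he (by simp)
    · rw [mul_elem_some hp] at he
      refine ⟨i, j, p, hp, ?_⟩
      have hg : g * p * g = g := by
        injection he
      have h1 : g * p * g = 1 * g := by rw [one_mul]; exact hg
      have h3 : g * p = 1 := mul_right_cancel h1
      have h2 : g = p⁻¹ := eq_inv_of_mul_eq_one_left h3
      rw [h2]

/-- The key η₂ computation: `ef η₂ fe` for the idempotents
`e = (p⁻¹; i, j)` and `f = (q⁻¹; k, l)`, when all four sandwich entries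
`p_{j,i} = p`, `p_{l,k} = q`, `p_{j,k} = r`, `p_{l,i} = s` are nonzero. -/
theorem eta_ef_fe {i k : Fin n} {j l : Fin m} {p q r s : G}
    (hp : P j i = some p) (hq : P l k = some q) (hr : P j k = some r)
    (hs : P l i = some s) :
    eta (ReesMatrix G n m P)
      (elem (p⁻¹ * r * q⁻¹) i l) (elem (q⁻¹ * s * p⁻¹) k j) := by
  apply Relation.TransGen.single
  refine ⟨2, one_le_two, Or.inr ⟨one_lt_two,
    fun t => if t = 1 then ((elem r⁻¹ k j : ReesMatrix G n m P) : WithOne (ReesMatrix G n m P))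
      else ((elem (r⁻¹ * p * s⁻¹ * q * r⁻¹ * p * s⁻¹) k l : ReesMatrix G n m P) :
        WithOne (ReesMatrix G n m P)), ?_, ?_⟩⟩
  · show _ = (malcev _ _ _ 2).1
    simp only [malcev]
    norm_num
    rw [← WithOne.coe_mul, ← WithOne.coe_mul, ← WithOne.coe_mul, ← WithOne.coe_mul,
      ← WithOne.coe_mul, ← WithOne.coe_mul]
    rw [WithOne.coe_inj]
    simp only [mul_elem_some hp, mul_elem_some hq, mul_elem_some hr, mul_elem_some hs]
    congr 1
    group
  · show _ = (malcev _ _ _ 2).2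
    simp only [malcev]
    norm_num
    rw [← WithOne.coe_mul, ← WithOne.coe_mul, ← WithOne.coe_mul, ← WithOne.coe_mul,
      ← WithOne.coe_mul, ← WithOne.coe_mul]
    rw [WithOne.coe_inj]
    simp only [mul_elem_some hp, mul_elem_some hq, mul_elem_some hr, mul_elem_some hs]
    congr 1
    group

/-- Idempotents commute modulo `η*`. -/
theorem etaStar_idem_comm (hdiag : IsCSDiagonal P) {e f : ReesMatrix G n m P}
    (he : e * e = e) (hf : f * f = f) :
    etaStar (ReesMatrix G n m P) (e * f) (f * e) := by
  rcases idem_cases he with rfl | ⟨i, j, p, hp, rfl⟩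
  · rw [theta_mul, mul_theta]
    exact (etaStar _).refl _
  rcases idem_cases hf with rfl | ⟨k, l, q, hq, rfl⟩
  · rw [theta_mul, mul_theta]
    exact (etaStar _).refl _
  rcases hr : P j k with _ | r
  · have hs : P l i = none := by
      rcases hs0 : P l i with _ | s
      · rfl
      · exact absurd hr (hdiag l j i k (by simp [hs0]) (by simp [hp]) (by simp [hq]))
    rw [mul_elem_none hr, mul_elem_none hs]
    exact (etaStar _).refl _
  · have hs' : P l i ≠ none :=
      hdiag j l k i (by simp [hr]) (by simp [hq]) (by simp [hp])
    obtain ⟨s, hs⟩ : ∃ s, P l i = some s := Option.ne_none_iff_exists'.mp hs'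
    rw [mul_elem_some hr, mul_elem_some hs]
    exact ConGen.Rel.of _ _ (eta_ef_fe hp hq hr hs)

end ReesMatrix

end Aux

/-- If a finite regular Rees matrix semigroup `M⁰(G,n,m;P)` is
CS-diagonal, then `M/η*` is an inverse semigroup. -/
theorem isInverse_quotient_etaStar_of_csDiagonal (G : Type*) [Group G] [Finite G]
    (n m : ℕ) (hn : 0 < n) (hm : 0 < m) (P : Fin m → Fin n → Option G)
    (hreg : IsRegularSandwich P) (hdiag : IsCSDiagonal P) :
    IsInverseSemigroup (etaStar (ReesMatrix G n m P)).Quotient := by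
  set M := ReesMatrix G n m P with hM
  set c := etaStar M with hc
  -- every element of the quotient is a class
  have hsurj : ∀ X : c.Quotient, ∃ a : M, (a : c.Quotient) = X := fun X => by
    obtain ⟨a, ha⟩ := Quotient.exists_rep X
    exact ⟨a, ha⟩
  -- idempotents in the quotient commute
  have hcomm : ∀ U V : c.Quotient, U * U = U → V * V = V → U * V = V * U := by
    -- first: idempotent lifting (Lallement)
    have lift : ∀ U : c.Quotient, U * U = U → ∃ e : M, e * e = e ∧ (e : c.Quotient) = U := by
      intro U hU
      obtain ⟨a, rfl⟩ := hsurj U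
      obtain ⟨x', hx1, hx2⟩ := ReesMatrix.exists_inv hreg (a * a)
      refine ⟨a * x' * a, ?_, ?_⟩
      · calc a * x' * a * (a * x' * a) = a * (x' * (a * a) * x' * a) := by
              simp only [mul_assoc]
        _ = a * (x' * a) := by rw [hx2]
        _ = a * x' * a := by rw [mul_assoc]
      · have h1 : ((a * a : M) : c.Quotient) = (a : c.Quotient) := by
          rw [← hU]; rfl
        have h2 : ((a * a) * x' * (a * a) : M) = (a * a : M) := hx1
        calc ((a * x' * a : M) : c.Quotient)
            = (a : c.Quotient) * (x' : c.Quotient) * (a : c.Quotient) := rfl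
          _ = ((a * a : M) : c.Quotient) * (x' : c.Quotient) * ((a * a : M) : c.Quotient) := by
              rw [h1]
          _ = (((a * a) * x' * (a * a) : M) : c.Quotient) := rfl
          _ = ((a * a : M) : c.Quotient) := by rw [h2]
          _ = (a : c.Quotient) := h1
    intro U V hU hV
    obtain ⟨e, he, rfl⟩ := lift U hU
    obtain ⟨f, hf, rfl⟩ := lift V hV
    show ((e * f : M) : c.Quotient) = ((f * e : M) : c.Quotient)
    exact (Con.eq c).mpr (ReesMatrix.etaStar_idem_comm hdiag he hf)
  intro X
  obtain ⟨a, rfl⟩ := hsurj X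
  obtain ⟨y, hy1, hy2⟩ := ReesMatrix.exists_inv hreg a
  refine ⟨(y : c.Quotient), ⟨?_, ?_⟩, ?_⟩
  · show ((a * y * a : M) : c.Quotient) = _
    rw [hy1]
  · show ((y * a * y : M) : c.Quotient) = _
    rw [hy2]
  · rintro Z ⟨hz1, hz2⟩
    set X := (a : c.Quotient)
    set Y := (y : c.Quotient) with hY
    have hy1' : X * Y * X = X := by rw [hY]; show ((a * y * a : M) : c.Quotient) = _; rw [hy1]
    have hy2' : Y * X * Y = Y := by rw [hY]; show ((y * a * y : M) : c.Quotient) = _; rw [hy2]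
    -- idempotents
    have iXY : (X * Y) * (X * Y) = X * Y := by
      calc (X * Y) * (X * Y) = (X * Y * X) * Y := by simp only [mul_assoc]
      _ = X * Y := by rw [hy1']
    have iXZ : (X * Z) * (X * Z) = X * Z := by
      calc (X * Z) * (X * Z) = (X * Z * X) * Z := by simp only [mul_assoc]
      _ = X * Z := by rw [hz1]
    have iYX : (Y * X) * (Y * X) = Y * X := by
      calc (Y * X) * (Y * X) = Y * (X * Y * X) := by simp only [mul_assoc]
      _ = Y * X := by rw [hy1']
    have iZX : (Z * X) * (Z * X) = Z * X := by
      calc (Z * X) * (Z * X) = Z * (X * Z * X) := by simp only [mul_assoc]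
      _ = Z * X := by rw [hz1]
    have key1 : Z = Y * X * Z := by
      calc Z = Z * X * Z := hz2.symm
      _ = Z * (X * Y * X) * Z := by rw [hy1']
      _ = (Z * X) * (Y * X) * Z := by simp only [mul_assoc]
      _ = (Y * X) * (Z * X) * Z := by rw [hcomm _ _ iZX iYX]
      _ = Y * X * (Z * X * Z) := by simp only [mul_assoc]
      _ = Y * X * Z := by rw [hz2]
    have key2 : Y = Y * X * Z := by
      calc Y = Y * X * Y := hy2'.symm
      _ = Y * (X * Z * X) * Y := by rw [hz1]
      _ = Y * (X * Z) * (X * Y) := by simp only [mul_assoc]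
      _ = Y * ((X * Y) * (X * Z)) := by rw [← hcomm _ _ iXZ iXY]; simp only [mul_assoc]
      _ = (Y * X * Y) * (X * Z) := by simp only [mul_assoc]
      _ = Y * (X * Z) := by rw [hy2']
      _ = Y * X * Z := by rw [mul_assoc]
    rw [key1, ← key2]
end

section
/- Let φ : S → L be a semigroup homomorphism from a semigroup S to a semilattice L. If x η_n y for some n ≥ 1, then φ(x) = φ(y). Consequently, x η* y implies φ(x) = φ(y). -/
/-- In a monoid where everything commutes, `λ_n = ρ_n` for `n ≥ 1`. -/
lemma malcev_eq_of_comm {M : Type*} [Monoid M] (hc : ∀ a b : M, a * b = b * a)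
    (x y : M) (z : ℕ → M) : ∀ n, 1 ≤ n → (malcev x y z n).1 = (malcev x y z n).2 := by
  intro n hn
  induction n with
  | zero => omega
  | succ k ih =>
    rcases Nat.eq_or_lt_of_le hn with h | h
    · obtain rfl : k = 0 := by omega
      show x * z 1 * y = y * z 1 * x
      rw [hc (x * z 1) y, hc x (z 1), mul_assoc]
    · have := ih (by omega)
      simp [malcev, this]

lemma map_malcev {M N : Type*} [Monoid M] [Monoid N] (f : M →* N)
    (x y : M) (z : ℕ → M) (n : ℕ) :
    f ((malcev x y z n).1) = (malcev (f x) (f y) (f ∘ z) n).1 ∧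
    f ((malcev x y z n).2) = (malcev (f x) (f y) (f ∘ z) n).2 := by
  induction n with
  | zero => simp [malcev]
  | succ k ih => simp [malcev, ih.1, ih.2, map_mul, Function.comp]

/-- If `φ : S → L` is a homomorphism to a semilattice (a commutative
idempotent semigroup), then `x η_n y` implies `φ x = φ y`, and consequently
`x η* y` implies `φ x = φ y`. -/
theorem semilattice_hom_eq_of_eta {S L : Type*} [Semigroup S] [Semigroup L]
    (hcomm : ∀ a b : L, a * b = b * a) (hidem : ∀ a : L, a * a = a)
    (φ : S →ₙ* L) :
    (∀ n : ℕ, 1 ≤ n → ∀ x y : S, etaN S n x y → φ x = φ y) ∧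
    (∀ x y : S, etaStar S x y → φ x = φ y) := by
  set φ' : WithOne S →* WithOne L := WithOne.mapMulHom φ with hφ'
  have hc : ∀ a b : WithOne L, a * b = b * a := by
    intro a b
    induction a using WithOne.recOneCoe <;> induction b using WithOne.recOneCoe <;>
      simp [← WithOne.coe_mul, hcomm]
  have key : ∀ n : ℕ, 1 ≤ n → ∀ x y : S, etaN S n x y → φ x = φ y := by
    intro n hn x y h
    rcases h with ⟨_, rfl⟩ | ⟨hn1, z, hx, hy⟩
    · rfl
    · have e1 := (map_malcev φ' (x : WithOne S) (y : WithOne S) z n).1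
      have e2 := (map_malcev φ' (x : WithOne S) (y : WithOne S) z n).2
      have h3 := malcev_eq_of_comm hc (φ' (x : WithOne S)) (φ' (y : WithOne S))
        (⇑φ' ∘ z) n hn
      have hxy : φ' (x : WithOne S) = φ' (y : WithOne S) := by
        conv_lhs => rw [hx]
        conv_rhs => rw [hy]
        rw [e1, e2, h3]
      have hxy' : ((φ x : L) : WithOne L) = ((φ y : L) : WithOne L) := by
        simpa [hφ', WithOne.map_coe] using hxy
      exact WithOne.coe_inj.mp hxy'
  refine ⟨key, fun x y h => ?_⟩
  let c : Con S :=
    ⟨⟨fun a b => φ a = φ b, ⟨fun _ => rfl, Eq.symm, Eq.trans⟩⟩,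
      fun h1 h2 => by show φ _ = φ _; rw [map_mul, map_mul, h1, h2]⟩
  have he : ∀ a b : S, eta S a b → c a b := by
    intro a b hab
    induction hab with
    | single h => rcases h with ⟨n, hn, h⟩; exact key n hn _ _ h
    | tail _ h ih => rcases h with ⟨n, hn, h⟩; exact ih.trans (key n hn _ _ h)
  exact Con.conGen_le.mpr he h
end

section
/- Let S be a finite completely regular semigroup. Then S/η* is a Clifford semigroup: S/η* is completely regular and every element of S/η* has exactly one inverse. -/
section Helpers

variable {M : Type*} [Monoid M]


private lemma key_words {E F : M} {k : ℕ} (hk : 3 ≤ k) (hE : E * E = E) (hF : F * F = F)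
    (hA : (E * F) ^ (k + 1) = E * F) (hB : (F * E) ^ (k + 1) = F * E) :
    E * F * (F * E) ^ k * (F * E) * ((E * F) ^ (k - 2) * E) *
        (F * E * (F * E) ^ k * (E * F)) = E * F ∧
      F * E * (F * E) ^ k * (E * F) * ((E * F) ^ (k - 2) * E) *
        (E * F * (F * E) ^ k * (F * E)) = F * E := by
  obtain ⟨k', rfl⟩ : ∃ k', k = k' + 3 := ⟨k - 3, by omega⟩
  have hsub : k' + 3 - 2 = k' + 1 := by omega
  rw [hsub]
  have scE : ∀ n : ℕ, E * (F * E) ^ n = (E * F) ^ n * E := fun n =>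
    SemiconjBy.pow_right ((mul_assoc E F E).symm : SemiconjBy E (F * E) (E * F)) n
  have scF : ∀ n : ℕ, F * (E * F) ^ n = (F * E) ^ n * F := fun n =>
    SemiconjBy.pow_right ((mul_assoc F E F).symm : SemiconjBy F (E * F) (F * E)) n
  have absFB : ∀ n : ℕ, F * (F * E) ^ (n + 1) = (F * E) ^ (n + 1) := by
    intro n
    rw [pow_succ', ← mul_assoc F (F * E) ((F * E) ^ n), ← mul_assoc F F E, hF]
  have absEA : ∀ n : ℕ, E * (E * F) ^ (n + 1) = (E * F) ^ (n + 1) := by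
    intro n
    rw [pow_succ', ← mul_assoc E (E * F) ((E * F) ^ n), ← mul_assoc E E F, hE]
  have absBE : ∀ n : ℕ, (F * E) ^ (n + 1) * E = (F * E) ^ (n + 1) := by
    intro n
    rw [pow_succ, mul_assoc ((F * E) ^ n) (F * E) E, mul_assoc F E E, hE]
  have absFBK : F * (F * E) ^ (k' + 3) = (F * E) ^ (k' + 3) := absFB (k' + 2)
  have absEA1 : E * (E * F) ^ (k' + 1) = (E * F) ^ (k' + 1) := absEA k'
  have absBEK : (F * E) ^ (k' + 3) * E = (F * E) ^ (k' + 3) := absBE (k' + 2)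
  have L1 : E * F * (F * E) ^ (k' + 3) * (F * E) = E * F * E := by
    calc E * F * (F * E) ^ (k' + 3) * (F * E)
        = E * (F * (F * E) ^ (k' + 3)) * (F * E) := by
          rw [mul_assoc E F ((F * E) ^ (k' + 3))]
      _ = E * (F * E) ^ (k' + 3) * (F * E) := by rw [absFBK]
      _ = (E * F) ^ (k' + 3) * E * (F * E) := by rw [scE]
      _ = (E * F) ^ (k' + 3) * (E * (F * E)) := by
          rw [mul_assoc ((E * F) ^ (k' + 3)) E (F * E)]
      _ = (E * F) ^ (k' + 3) * (E * F * E) := by rw [← mul_assoc E F E]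
      _ = (E * F) ^ (k' + 3) * (E * F) * E := by
          rw [← mul_assoc ((E * F) ^ (k' + 3)) (E * F) E]
      _ = (E * F) ^ (k' + 3 + 1) * E := by rw [← pow_succ]
      _ = E * F * E := by rw [hA]
  have L2 : F * E * (F * E) ^ (k' + 3) * (E * F) = F * E * F := by
    calc F * E * (F * E) ^ (k' + 3) * (E * F)
        = (F * E) ^ (k' + 3 + 1) * (E * F) := by rw [← pow_succ']
      _ = F * E * (E * F) := by rw [hB]
      _ = F * (E * (E * F)) := by rw [mul_assoc F E (E * F)]
      _ = F * (E * E * F) := by rw [← mul_assoc E E F]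
      _ = F * (E * F) := by rw [hE]
      _ = F * E * F := by rw [← mul_assoc F E F]
  have L3 : E * F * E * ((E * F) ^ (k' + 1) * E) = (E * F) ^ (k' + 2) * E := by
    calc E * F * E * ((E * F) ^ (k' + 1) * E)
        = E * F * (E * ((E * F) ^ (k' + 1) * E)) := by
          rw [mul_assoc (E * F) E ((E * F) ^ (k' + 1) * E)]
      _ = E * F * (E * (E * F) ^ (k' + 1) * E) := by
          rw [← mul_assoc E ((E * F) ^ (k' + 1)) E]
      _ = E * F * ((E * F) ^ (k' + 1) * E) := by rw [absEA1]
      _ = E * F * (E * F) ^ (k' + 1) * E := by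
          rw [← mul_assoc (E * F) ((E * F) ^ (k' + 1)) E]
      _ = (E * F) ^ (k' + 2) * E := by
          rw [show E * F * (E * F) ^ (k' + 1) = (E * F) ^ (k' + 2) from
            (pow_succ' (E * F) (k' + 1)).symm]
  have L4 : (E * F) ^ (k' + 2) * E * (F * E * F) = E * F := by
    calc (E * F) ^ (k' + 2) * E * (F * E * F)
        = (E * F) ^ (k' + 2) * (E * (F * E * F)) := by
          rw [mul_assoc ((E * F) ^ (k' + 2)) E (F * E * F)]
      _ = (E * F) ^ (k' + 2) * (E * (F * E) * F) := by rw [← mul_assoc E (F * E) F]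
      _ = (E * F) ^ (k' + 2) * (E * F * E * F) := by rw [← mul_assoc E F E]
      _ = (E * F) ^ (k' + 2) * (E * F * (E * F)) := by rw [mul_assoc (E * F) E F]
      _ = (E * F) ^ (k' + 2) * (E * F) * (E * F) := by
          rw [← mul_assoc ((E * F) ^ (k' + 2)) (E * F) (E * F)]
      _ = (E * F) ^ (k' + 3) * (E * F) := by
          rw [show (E * F) ^ (k' + 2) * (E * F) = (E * F) ^ (k' + 3) from
            (pow_succ (E * F) (k' + 2)).symm]
      _ = (E * F) ^ (k' + 3 + 1) := (pow_succ (E * F) (k' + 3)).symm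
      _ = E * F := hA
  have R3 : F * E * F * ((E * F) ^ (k' + 1) * E) = (F * E) ^ (k' + 3) := by
    calc F * E * F * ((E * F) ^ (k' + 1) * E)
        = F * E * (F * ((E * F) ^ (k' + 1) * E)) := by
          rw [mul_assoc (F * E) F ((E * F) ^ (k' + 1) * E)]
      _ = F * E * (F * (E * F) ^ (k' + 1) * E) := by
          rw [← mul_assoc F ((E * F) ^ (k' + 1)) E]
      _ = F * E * ((F * E) ^ (k' + 1) * F * E) := by rw [scF]
      _ = F * E * ((F * E) ^ (k' + 1) * (F * E)) := by
          rw [mul_assoc ((F * E) ^ (k' + 1)) F E]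
      _ = F * E * (F * E) ^ (k' + 2) := by
          rw [show (F * E) ^ (k' + 1) * (F * E) = (F * E) ^ (k' + 2) from
            (pow_succ (F * E) (k' + 1)).symm]
      _ = (F * E) ^ (k' + 3) := by
          rw [show F * E * (F * E) ^ (k' + 2) = (F * E) ^ (k' + 3) from
            (pow_succ' (F * E) (k' + 2)).symm]
  have R4 : (F * E) ^ (k' + 3) * (E * F * E) = F * E := by
    calc (F * E) ^ (k' + 3) * (E * F * E)
        = (F * E) ^ (k' + 3) * (E * (F * E)) := by rw [mul_assoc E F E]
      _ = (F * E) ^ (k' + 3) * E * (F * E) := by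
          rw [← mul_assoc ((F * E) ^ (k' + 3)) E (F * E)]
      _ = (F * E) ^ (k' + 3) * (F * E) := by rw [absBEK]
      _ = (F * E) ^ (k' + 3 + 1) := (pow_succ (F * E) (k' + 3)).symm
      _ = F * E := hB
  constructor
  · rw [L1, L2, L3, L4]
  · rw [L2, L1, R3, R4]


end Helpers

section Part2

variable {M : Type*} [Monoid M]

private lemma cr_pow_cycle {A : M} {m : ℕ} (h : A ^ (m + 1) = A) : ∀ c, A ^ (c * m + 1) = A
  | 0 => by simp
  | c + 1 => by
    have h2 : (c + 1) * m + 1 = m + (c * m + 1) := by ring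
    rw [h2, pow_add, cr_pow_cycle h c, ← pow_succ, h]

private lemma cr_idem_pow {I : M} (hI : I * I = I) : ∀ n, I ^ (n + 1) = I
  | 0 => pow_one I
  | n + 1 => by rw [pow_succ, cr_idem_pow hI n, hI]

private lemma malcev_eval (x y z₁ z₂ : M) :
    malcev x y (fun n => if n = 1 then z₁ else z₂) 2 =
      (x * z₁ * y * z₂ * (y * z₁ * x), y * z₁ * x * z₂ * (x * z₁ * y)) := by
  simp [malcev]

/-- A finite completely regular semigroup satisfies `x^(k+1) = x` for a
uniform exponent `k ≥ 3`. -/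
private lemma cr_exists_uniform_exp (S : Type*) [Semigroup S] [Finite S]
    (h : IsCompletelyRegular S) :
    ∃ k : ℕ, 3 ≤ k ∧ ∀ a : S, (a : WithOne S) ^ (k + 1) = (a : WithOne S) := by
  have hft : Fintype S := Fintype.ofFinite S
  have hfin : Finite (WithOne S) := inferInstanceAs (Finite (Option S))
  have key : ∀ a : S, ∃ m, 1 ≤ m ∧ (a : WithOne S) ^ (m + 1) = (a : WithOne S) := by
    intro a
    obtain ⟨b, h1, h2, h3⟩ := h a
    set A : WithOne S := (a : WithOne S) with hAdef
    set B : WithOne S := (b : WithOne S) with hBdef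
    have hA1 : A * B * A = A := by
      rw [hAdef, hBdef, ← WithOne.coe_mul, ← WithOne.coe_mul, h1]
    have hA2 : A * B = B * A := by
      rw [hAdef, hBdef, ← WithOne.coe_mul, ← WithOne.coe_mul, h2]
    have main : ∀ p q : ℕ, p < q → A ^ (p + 1) = A ^ (q + 1) →
        ∃ m, 1 ≤ m ∧ A ^ (m + 1) = A := by
      intro p q hpq hpow
      have hIdem : A * B * (A * B) = A * B := by
        rw [← mul_assoc, hA1]
      have hIpow : ∀ n, (A * B) ^ (n + 1) = A * B := cr_idem_pow hIdem
      have hIA : ∀ r : ℕ, A * B * A ^ (r + 1) = A ^ (r + 1) := by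
        intro r
        rw [pow_succ', ← mul_assoc, hA1]
      have hBA : ∀ n : ℕ, B ^ n * A ^ n = (A * B) ^ n := by
        intro n
        have hc : Commute B A := hA2.symm
        rw [← hc.mul_pow, hA2]
      have e1 : B ^ (p + 1) * A ^ (p + 1) = A * B := by rw [hBA, hIpow]
      obtain ⟨d, rfl⟩ : ∃ d, q = p + (d + 1) := ⟨q - p - 1, by omega⟩
      have e2 : B ^ (p + 1) * A ^ (p + (d + 1) + 1) = A * B * A ^ (d + 1) := by
        have hq : p + (d + 1) + 1 = (p + 1) + (d + 1) := by omega
        rw [hq, pow_add A (p + 1) (d + 1), ← mul_assoc, e1]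
      have e3 : A * B * A ^ (d + 1) = A * B := by rw [← e2, ← hpow, e1]
      refine ⟨d + 1, by omega, ?_⟩
      calc A ^ (d + 1 + 1) = A * B * A ^ (d + 1 + 1) := (hIA (d + 1)).symm
        _ = A * B * A ^ (d + 1) * A := by rw [pow_succ A (d + 1), ← mul_assoc]
        _ = A * B * A := by rw [e3]
        _ = A := hA1
    obtain ⟨i, j, hij, hfij⟩ :=
      Finite.exists_ne_map_eq_of_infinite (fun n : ℕ => A ^ (n + 1))
    rcases hij.lt_or_gt with hlt | hlt
    · exact main i j hlt hfij
    · exact main j i hlt hfij.symm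
  choose m hm1 hm2 using key
  have : Fintype S := Fintype.ofFinite S
  refine ⟨3 * ∏ x : S, m x, ?_, ?_⟩
  · have h1 : 1 ≤ ∏ x : S, m x := Finset.one_le_prod' fun i _ => hm1 i
    omega
  · intro a
    obtain ⟨c, hc⟩ : m a ∣ 3 * ∏ x : S, m x :=
      Dvd.dvd.mul_left (Finset.dvd_prod_of_mem m (Finset.mem_univ a)) 3
    rw [hc, mul_comm (m a) c, cr_pow_cycle (hm2 a) c]

end Part2

-- continuation: eta relation for idempotents, quotient lemmas
section Part3

variable {S : Type*} [Semigroup S]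

/-- For idempotents `e`, `f` of `S`, `(ef, fe) ∈ η₂ ⊆ η ⊆ η*`. -/
private lemma etaStar_mul_comm_of_idem {k : ℕ} (hk : 3 ≤ k)
    (hpow : ∀ a : S, (a : WithOne S) ^ (k + 1) = (a : WithOne S))
    {e f : S} (he : e * e = e) (hf : f * f = f) :
    etaStar S (e * f) (f * e) := by
  set E : WithOne S := (e : WithOne S) with hEdef
  set F : WithOne S := (f : WithOne S) with hFdef
  have hE : E * E = E := by rw [hEdef, ← WithOne.coe_mul, he]
  have hF : F * F = F := by rw [hFdef, ← WithOne.coe_mul, hf]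
  have hA : (E * F) ^ (k + 1) = E * F := by
    have := hpow (e * f); rwa [WithOne.coe_mul] at this
  have hB : (F * E) ^ (k + 1) = F * E := by
    have := hpow (f * e); rwa [WithOne.coe_mul] at this
  obtain ⟨w1, w2⟩ := key_words hk hE hF hA hB
  have h2 : etaN S 2 (e * f) (f * e) := by
    refine Or.inr ⟨one_lt_two,
      fun n => if n = 1 then (F * E) ^ k else (E * F) ^ (k - 2) * E, ?_, ?_⟩
    · rw [malcev_eval, WithOne.coe_mul, WithOne.coe_mul]
      exact w1.symm
    · rw [malcev_eval, WithOne.coe_mul, WithOne.coe_mul]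
      exact w2.symm
  exact ConGen.Rel.of _ _ (Relation.TransGen.single ⟨2, one_le_two, h2⟩)

/-- `sp a n = a^(n+1)` inside the semigroup `S`. -/
private def sp (a : S) : ℕ → S
  | 0 => a
  | n + 1 => sp a n * a

private lemma sp_coe (a : S) : ∀ n, ((sp a n : S) : WithOne S) = (a : WithOne S) ^ (n + 1)
  | 0 => by simp [sp]
  | n + 1 => by rw [sp, WithOne.coe_mul, sp_coe a n, ← pow_succ]

private lemma sp_quot {c : Con S} {a : S} (ha : (a : c.Quotient) * a = a) :
    ∀ n, ((sp a n : S) : c.Quotient) = (a : c.Quotient)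
  | 0 => rfl
  | n + 1 => by rw [sp, Con.coe_mul, sp_quot ha n, ha]

private lemma sp_idem {k : ℕ} (hk : 3 ≤ k)
    (hpow : ∀ a : S, (a : WithOne S) ^ (k + 1) = (a : WithOne S)) (a : S) :
    sp a (k - 1) * sp a (k - 1) = sp a (k - 1) := by
  obtain ⟨k', rfl⟩ : ∃ k', k = k' + 3 := ⟨k - 3, by omega⟩
  have hco : ∀ x y : S, (x : WithOne S) = y → x = y := fun x y hxy => by
    exact_mod_cast hxy
  apply hco
  rw [WithOne.coe_mul, sp_coe]
  have hs : k' + 3 - 1 + 1 = k' + 3 := by omega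
  rw [hs]
  calc (a : WithOne S) ^ (k' + 3) * (a : WithOne S) ^ (k' + 3)
      = (a : WithOne S) ^ (k' + 3 + 1) * (a : WithOne S) ^ (k' + 2) := by
        rw [← pow_add, ← pow_add]; congr 1; omega
    _ = (a : WithOne S) * (a : WithOne S) ^ (k' + 2) := by rw [hpow a]
    _ = (a : WithOne S) ^ (k' + 3) := by rw [← pow_succ']

end Part3

private theorem quotient_etaStar_clifford_aux (S : Type*) [Semigroup S] [Finite S]
    (h : IsCompletelyRegular S) :
    IsCompletelyRegular (etaStar S).Quotient ∧
      (∀ x : (etaStar S).Quotient, ∃! y, x * y * x = x ∧ y * x * y = y) := by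
  obtain ⟨k, hk3, hpow⟩ := cr_exists_uniform_exp S h
  have hcr : IsCompletelyRegular (etaStar S).Quotient := by
    intro q
    induction q using Con.induction_on with
    | _ a =>
      obtain ⟨b, h1, h2, h3⟩ := h a
      exact ⟨(b : (etaStar S).Quotient),
        by rw [← Con.coe_mul, ← Con.coe_mul, h1],
        by rw [← Con.coe_mul, ← Con.coe_mul, h2],
        by rw [← Con.coe_mul, ← Con.coe_mul, h3]⟩
  refine ⟨hcr, ?_⟩
  -- idempotents commute in the quotient
  have hic : ∀ u v : (etaStar S).Quotient, u * u = u → v * v = v → u * v = v * u := by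
    intro u v
    induction u using Con.induction_on with
    | _ a =>
    induction v using Con.induction_on with
    | _ b =>
      intro ha hb
      rw [← Con.coe_mul] at ha hb
      set e := sp a (k - 1) with hedef
      set f := sp b (k - 1) with hfdef
      have he : e * e = e := sp_idem hk3 hpow a
      have hf : f * f = f := sp_idem hk3 hpow b
      have hea : ((e : S) : (etaStar S).Quotient) = (a : (etaStar S).Quotient) :=
        sp_quot (by rw [← Con.coe_mul, ha]) (k - 1)
      have hfb : ((f : S) : (etaStar S).Quotient) = (b : (etaStar S).Quotient) :=
        sp_quot (by rw [← Con.coe_mul, hb]) (k - 1)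
      calc (a : (etaStar S).Quotient) * b = (e : (etaStar S).Quotient) * f := by
            rw [hea, hfb]
        _ = ((e * f : S) : (etaStar S).Quotient) := (Con.coe_mul _ _).symm
        _ = ((f * e : S) : (etaStar S).Quotient) :=
            (Con.eq _).mpr (etaStar_mul_comm_of_idem hk3 hpow he hf)
        _ = (f : (etaStar S).Quotient) * e := Con.coe_mul _ _
        _ = (b : (etaStar S).Quotient) * a := by rw [hea, hfb]
  -- uniqueness of inverses
  intro x
  obtain ⟨y0, hxy0x, hcomm0, hy0xy0⟩ := hcr x
  have hxy0x' : x * y0 * x = x := hxy0x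
  refine ⟨y0, ⟨hxy0x, hy0xy0⟩, ?_⟩
  rintro y ⟨hxyx, hyxy⟩
  have i1 : (x * y) * (x * y) = x * y := by rw [← mul_assoc, hxyx]
  have i2 : (x * y0) * (x * y0) = x * y0 := by rw [← mul_assoc, hxy0x]
  have i3 : (y * x) * (y * x) = y * x := by rw [← mul_assoc, hyxy]
  have i4 : (y0 * x) * (y0 * x) = y0 * x := by rw [← mul_assoc, hy0xy0]
  have hR : x * y = x * y0 := by
    calc x * y = (x * y0) * (x * y) := by rw [← mul_assoc, hxy0x]
      _ = (x * y) * (x * y0) := hic _ _ i2 i1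
      _ = x * y0 := by rw [← mul_assoc, hxyx]
  have hL : y * x = y0 * x := by
    calc y * x = (y * x) * (y0 * x) := by
          rw [mul_assoc y x (y0 * x), ← mul_assoc x y0 x, hxy0x]
      _ = (y0 * x) * (y * x) := hic _ _ i3 i4
      _ = y0 * x := by rw [mul_assoc y0 x (y * x), ← mul_assoc x y x, hxyx]
  calc y = y * x * y := hyxy.symm
    _ = y0 * x * y := by rw [hL]
    _ = y0 * (x * y) := mul_assoc _ _ _
    _ = y0 * (x * y0) := by rw [hR]
    _ = y0 * x * y0 := (mul_assoc _ _ _).symm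
    _ = y0 := hy0xy0

/-- If `S` is a finite completely regular semigroup, then `S/η*`
is a Clifford semigroup: completely regular and inverse. -/
theorem quotient_etaStar_clifford (S : Type*) [Semigroup S] [Finite S]
    (h : IsCompletelyRegular S) :
    IsCompletelyRegular (etaStar S).Quotient ∧
      IsInverseSemigroup (etaStar S).Quotient := by
  have main := quotient_etaStar_clifford_aux S h
  exact ⟨main.1, fun x => main.2 x⟩
end
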